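/- Every solution of the OIM dynamics has monotonically nonincreasing energy: if θ : ℝ → ℝ^N is differentiable and satisfies θ'(t) = f(θ(t)) for all t, then for all s ≤ t, E(θ(t)) ≤ E(θ(s)). -/

import Mathlib

open Real Finset

/-- The OIM energy function
`E(θ) = -K ∑_{i,j, j≠i} W i j * cos (θ i - θ j) - K_s ∑ i, cos (2 θ i)`. -/
noncomputable def oimEnergy (N : ℕ) (K Ks : ℝ) (W : Fin N → Fin N → ℝ)
    (θ : Fin N → ℝ) : ℝ :=
  -K * ∑ i, ∑ j ∈ Finset.univ.filter (fun j => j ≠ i), W i j * Real.cos (θ i - θ j)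
    - Ks * ∑ i, Real.cos (2 * θ i)

/-- The OIM vector field `f i (θ) = -K ∑ j, W i j * sin (θ i - θ j) - K_s * sin (2 θ i)`. -/
noncomputable def oimField (N : ℕ) (K Ks : ℝ) (W : Fin N → Fin N → ℝ)
    (θ : Fin N → ℝ) (i : Fin N) : ℝ :=
  -K * ∑ j, W i j * Real.sin (θ i - θ j) - Ks * Real.sin (2 * θ i)

lemma oim_algebra (N : ℕ) (K Ks : ℝ) (W : Fin N → Fin N → ℝ)
    (hdiag : ∀ i, W i i = 0) (hsym : ∀ i j, W i j = W j i)
    (x : Fin N → ℝ) (v : Fin N → ℝ) (hv : v = oimField N K Ks W x) :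
    -2 * ∑ i, (v i) ^ 2 =
      -K * ∑ i, ∑ j ∈ Finset.univ.filter (fun j => j ≠ i),
          W i j * (-(Real.sin (x i - x j)) * (v i - v j))
        - Ks * ∑ i, (-(Real.sin (2 * x i)) * (2 * v i)) := by
  have hfull : ∀ i, ∑ j ∈ Finset.univ.filter (fun j => j ≠ i),
      W i j * (-(Real.sin (x i - x j)) * (v i - v j))
      = ∑ j, W i j * (-(Real.sin (x i - x j)) * (v i - v j)) := by
    intro i
    apply Finset.sum_filter_of_ne
    intro j _ hne h
    subst h
    rw [hdiag] at hne
    simp at hne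
  simp only [hfull]
  have hswap : ∑ i, ∑ j, W i j * Real.sin (x i - x j) * v j
      = -∑ i, ∑ j, W i j * Real.sin (x i - x j) * v i := by
    rw [Finset.sum_comm]
    rw [← Finset.sum_neg_distrib]
    apply Finset.sum_congr rfl
    intro i _
    rw [← Finset.sum_neg_distrib]
    apply Finset.sum_congr rfl
    intro j _
    rw [hsym j i]
    have : Real.sin (x j - x i) = -Real.sin (x i - x j) := by
      rw [← Real.sin_neg]; ring_nf
    rw [this]; ring
  have expand : ∀ i, ∑ j, W i j * (-(Real.sin (x i - x j)) * (v i - v j))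
      = -(∑ j, W i j * Real.sin (x i - x j) * v i)
        + ∑ j, W i j * Real.sin (x i - x j) * v j := by
    intro i
    rw [← Finset.sum_neg_distrib, ← Finset.sum_add_distrib]
    apply Finset.sum_congr rfl
    intro j _
    ring
  simp only [expand]
  rw [Finset.sum_add_distrib, Finset.sum_neg_distrib, hswap]
  have hvi : ∀ i, v i = -K * (∑ j, W i j * Real.sin (x i - x j)) - Ks * Real.sin (2 * x i) := by
    intro i; rw [hv]; rfl
  trans ∑ i, (2 * K * (∑ j, W i j * Real.sin (x i - x j) * v i)
      - Ks * (-(Real.sin (2 * x i)) * (2 * v i)))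
  · rw [Finset.mul_sum]
    apply Finset.sum_congr rfl
    intro i _
    rw [← Finset.sum_mul, hvi i]
    ring
  · rw [Finset.sum_sub_distrib, ← Finset.mul_sum, ← Finset.mul_sum]
    ring

/-- every solution of the OIM dynamics has nonincreasing energy. -/
theorem oim_energy_nonincreasing (N : ℕ) (hN : 1 ≤ N) (K Ks : ℝ)
    (W : Fin N → Fin N → ℝ) (hdiag : ∀ i, W i i = 0) (hsym : ∀ i j, W i j = W j i)
    (θ : ℝ → Fin N → ℝ)
    (hθ : ∀ t, HasDerivAt θ (oimField N K Ks W (θ t)) t) :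
    ∀ s t : ℝ, s ≤ t → oimEnergy N K Ks W (θ t) ≤ oimEnergy N K Ks W (θ s) := by
  have key : ∀ t : ℝ, HasDerivAt (fun s => oimEnergy N K Ks W (θ s))
      (-2 * ∑ i, (oimField N K Ks W (θ t) i) ^ 2) t := by
    intro t
    set v := oimField N K Ks W (θ t) with hv
    have hcomp : ∀ i, HasDerivAt (fun s => θ s i) (v i) t := by
      intro i
      exact (hasDerivAt_pi.mp (hθ t)) i
    have h1 : ∀ i j, HasDerivAt (fun s => Real.cos (θ s i - θ s j))
        (-(Real.sin (θ t i - θ t j)) * (v i - v j)) t := by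
      intro i j
      exact (Real.hasDerivAt_cos (θ t i - θ t j)).comp t ((hcomp i).sub (hcomp j))
    have h2 : ∀ i, HasDerivAt (fun s => Real.cos (2 * θ s i))
        (-(Real.sin (2 * θ t i)) * (2 * v i)) t := by
      intro i
      exact (Real.hasDerivAt_cos (2 * θ t i)).comp t ((hcomp i).const_mul 2)
    have hE : HasDerivAt (fun s => oimEnergy N K Ks W (θ s))
        (-K * ∑ i, ∑ j ∈ Finset.univ.filter (fun j => j ≠ i),
            W i j * (-(Real.sin (θ t i - θ t j)) * (v i - v j))
          - Ks * ∑ i, (-(Real.sin (2 * θ t i)) * (2 * v i))) t := by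
      unfold oimEnergy
      exact ((HasDerivAt.fun_sum fun i _ => HasDerivAt.fun_sum fun j _ =>
        (h1 i j).const_mul (W i j)).const_mul (-K)).sub
        ((HasDerivAt.fun_sum fun i _ => h2 i).const_mul Ks)
    rw [oim_algebra N K Ks W hdiag hsym (θ t) v hv]
    exact hE
  intro s t hst
  have hdiff : Differentiable ℝ (fun s => oimEnergy N K Ks W (θ s)) :=
    fun x => (key x).differentiableAt
  have hder : ∀ x, deriv (fun s => oimEnergy N K Ks W (θ s)) x ≤ 0 := by
    intro x
    rw [(key x).deriv]
    have : (0:ℝ) ≤ ∑ i, (oimField N K Ks W (θ x) i) ^ 2 :=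
      Finset.sum_nonneg fun i _ => sq_nonneg _
    linarith
  exact antitone_of_deriv_nonpos hdiff hder hst
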